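/- Let $(C,D)$ be a regular MASA inclusion, let $B$ be a unital commutative complex Banach algebra, and for $i = 1,2$ let $\Delta_i : C \to B$ be bounded linear $D$-modular maps (i.e., $\Delta_i(xd) = \Delta_i(x)\Delta_i(d)$ and $\Delta_i(dx) = \Delta_i(d)\Delta_i(x)$ for all $x \in C$, $d \in D$) such that $\Delta_1|_D = \Delta_2|_D =: \iota$. If $\iota$ is $D$-thick in $B$, i.e., for every nonzero $b \in B$ there exists a nonzero $h \in D$ such that $hd = 0$ for every $d \in D$ with $b\,\iota(d) = 0$, then $\Delta_1 = \Delta_2$. -/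

import Mathlib

/-- `v` is a normalizer of the subset `S`:  `v* S v ⊆ S` and `v S v* ⊆ S`. -/
def IsNormalizer {C : Type*} [Mul C] [Star C] (S : Set C) (v : C) : Prop :=
  ∀ d ∈ S, star v * d * v ∈ S ∧ v * d * star v ∈ S


/-- Bernoulli-type inequality: `(1 + m·u)(1-u)^m ≤ 1` for `u ∈ [0,1]`. -/
lemma aux_bernoulli (m : ℕ) {u : ℝ} (h0 : 0 ≤ u) (h1 : u ≤ 1) :
    (1 + m * u) * (1 - u) ^ m ≤ 1 := by
  induction m with
  | zero => simp
  | succ n ih =>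
    have hz : (0:ℝ) ≤ 1 - u := by linarith
    have hp : (0:ℝ) ≤ (1 - u) ^ n := pow_nonneg hz n
    calc (1 + (n + 1 : ℕ) * u) * (1 - u) ^ (n + 1)
        = ((1 + ((n : ℝ) + 1) * u) * (1 - u)) * (1 - u) ^ n := by push_cast; ring
      _ ≤ (1 + n * u) * (1 - u) ^ n := by
          have key : (1 + ((n:ℝ) + 1) * u) * (1 - u) ≤ 1 + n * u := by
            nlinarith [mul_nonneg (by positivity : (0:ℝ) ≤ (n:ℝ) + 1) (sq_nonneg u)]
          exact mul_le_mul_of_nonneg_right key hp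
      _ ≤ 1 := ih

/-- `u (1-u)^m ≤ 1/m` on `[0,1]`. -/
lemma aux_mul_pow (m : ℕ) (hm : 1 ≤ m) {u : ℝ} (h0 : 0 ≤ u) (h1 : u ≤ 1) :
    u * (1 - u) ^ m ≤ 1 / m := by
  have hz : (0:ℝ) ≤ 1 - u := by linarith
  have hp : (0:ℝ) ≤ (1 - u) ^ m := pow_nonneg hz m
  have hb := aux_bernoulli m h0 h1
  have hm' : (0:ℝ) < m := by exact_mod_cast hm
  rw [le_div_iff₀ hm']
  nlinarith

/-- Approximation lemma: for any `v` with `star v * v ∈ D`, the element `v` is approximately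
`v * (d * (star v * v))` for suitable `d ∈ D`. -/
lemma approx_unit {C : Type*} [NormedRing C] [StarRing C] [CStarRing C] [NormedAlgebra ℂ C]
    [CompleteSpace C] [StarModule ℂ C]
    (D : StarSubalgebra ℂ C) (v : C) (hva : star v * v ∈ D)
    {ε : ℝ} (hε : 0 < ε) :
    ∃ d ∈ D, ‖v * (d * (star v * v)) - v‖ < ε := by
  letI : CStarAlgebra C := {}
  by_cases hv0 : v = 0
  · exact ⟨0, zero_mem D, by simpa [hv0] using hε⟩
  haveI : Nontrivial C := ⟨⟨v, 0, hv0⟩⟩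
  set a := star v * v with hadef
  have ha : IsSelfAdjoint a := IsSelfAdjoint.star_mul_self v
  set M := ‖a‖ with hMdef
  have hM : 0 < M := by
    have : a ≠ 0 := by
      intro h0
      exact hv0 ((CStarRing.star_mul_self_eq_zero_iff v).mp h0)
    simpa [hMdef] using norm_pos_iff.mpr this
  set c : ℝ := (M ^ 2)⁻¹ with hcdef
  have hc0 : 0 ≤ c := by positivity
  -- choose k
  obtain ⟨k₀, hk₀⟩ := exists_nat_gt (M ^ 2 / (4 * ε ^ 4))
  set k : ℕ := k₀ + 1 with hkdef
  have hk1 : 1 ≤ k := Nat.le_add_left 1 k₀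
  have hkpos : (0:ℝ) < k := by exact_mod_cast hk1
  have hkbig : M ^ 2 / (4 * ε ^ 4) < k := by
    have : (k₀ : ℝ) ≤ k := by exact_mod_cast Nat.le_succ k₀
    linarith
  have hBlt : Real.sqrt (M ^ 2 * (1 / (4 * k))) < ε ^ 2 := by
    rw [Real.sqrt_lt' (by positivity)]
    rw [div_lt_iff₀ (by positivity)] at hkbig
    calc M ^ 2 * (1 / (4 * k)) < (4 * ε ^ 4 * k) * (1 / (4 * k)) := by
          apply mul_lt_mul_of_pos_right _ (by positivity)
          linarith
      _ = ε ^ 4 := by field_simp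
      _ = (ε ^ 2) ^ 2 := by ring
  set B := Real.sqrt (M ^ 2 * (1 / (4 * k))) with hBdef
  have hB0 : 0 ≤ B := Real.sqrt_nonneg _
  -- the element
  set z : C := 1 - (c : ℂ) • a ^ 2 with hzdef
  have hzD : z ∈ D := sub_mem (one_mem D) (SMulMemClass.smul_mem _ (pow_mem hva 2))
  set S : C := ∑ i ∈ Finset.range k, z ^ i with hSdef
  have hSD : S ∈ D := sum_mem fun i _ => pow_mem hzD i
  refine ⟨(c : ℂ) • (S * a), SMulMemClass.smul_mem _ (mul_mem hSD hva), ?_⟩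
  have hgeom : ((c : ℂ) • (S * a)) * a = 1 - z ^ k := by
    have hg := geom_sum_mul z k
    rw [← hSdef] at hg
    have h1z : 1 - z = (c : ℂ) • a ^ 2 := by rw [hzdef, sub_sub_cancel]
    calc ((c : ℂ) • (S * a)) * a = S * ((c : ℂ) • a ^ 2) := by
          rw [smul_mul_assoc, mul_smul_comm, mul_assoc, sq]
      _ = S * (1 - z) := by rw [h1z]
      _ = -(S * (z - 1)) := by noncomm_ring
      _ = 1 - z ^ k := by rw [hg, neg_sub]
  have hrw : v * (((c : ℂ) • (S * a)) * a) - v = -(v * z ^ k) := by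
    rw [hgeom]; noncomm_ring
  rw [hadef] at hrw ⊢
  rw [hrw, norm_neg]
  -- selfadjointness of z
  have hzsa : IsSelfAdjoint z := by
    rw [hzdef]
    have hsc : star ((c : ℂ)) = (c : ℂ) := by simp [Complex.star_def, Complex.conj_ofReal]
    exact (IsSelfAdjoint.one (R := C)).sub (IsSelfAdjoint.smul hsc (ha.pow 2))
  -- C* norm identity
  have hCs : ‖v * z ^ k‖ * ‖v * z ^ k‖ = ‖z ^ k * (a * z ^ k)‖ := by
    rw [← CStarRing.norm_star_mul_self (x := v * z ^ k)]
    congr 1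
    rw [star_mul, (hzsa.pow k).star_eq]
    rw [hadef]; noncomm_ring
  -- cfc representation
  set f : ℝ → ℝ := fun t => (1 - c * t ^ 2) ^ k with hfdef
  have hfz : cfc f a = z ^ k := by
    rw [hfdef, cfc_pow ..]
    congr 1
    rw [cfc_sub .., cfc_const_mul .., cfc_pow_id ..,
      show (fun _ : ℝ => (1:ℝ)) = (1 : ℝ → ℝ) from rfl, cfc_one ℝ a, hzdef, Complex.coe_smul]
  have hkey : cfc (fun t : ℝ => f t * (t * f t)) a = z ^ k * (a * z ^ k) := by
    rw [cfc_mul (hf := by fun_prop) (hg := by fun_prop), cfc_mul (hf := by fun_prop) (hg := by fun_prop), cfc_id' .., hfz]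
  -- the norm bound
  have hnormle : ‖z ^ k * (a * z ^ k)‖ ≤ B := by
    rw [← hkey]
    apply norm_cfc_le hB0
    intro t ht
    have htM : |t| ≤ M := by simpa [hMdef] using spectrum.norm_le_norm_of_mem ht
    set u : ℝ := c * t ^ 2 with hudef
    have hu0 : 0 ≤ u := by positivity
    have ht2 : t ^ 2 ≤ M ^ 2 := by nlinarith [abs_nonneg t, sq_abs t]
    have hu1 : u ≤ 1 := by
      rw [hudef, hcdef]
      rw [inv_mul_le_iff₀ (by positivity)]
      linarith
    have ht2u : t ^ 2 = M ^ 2 * u := by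
      rw [hudef, hcdef]; field_simp
    have hfu : f t = (1 - u) ^ k := by rw [hfdef]
    have hsq : (f t * (t * f t)) = t * (1 - u) ^ (2 * k) := by
      rw [hfu]; ring
    rw [Real.norm_eq_abs, hsq, ← Real.sqrt_sq_eq_abs]
    apply Real.sqrt_le_sqrt
    have expand : (t * (1 - u) ^ (2 * k)) ^ 2 = M ^ 2 * (u * (1 - u) ^ (4 * k)) := by
      calc (t * (1 - u) ^ (2 * k)) ^ 2 = t ^ 2 * (1 - u) ^ (2 * k * 2) := by
            rw [pow_mul ((1:ℝ) - u) (2 * k) 2]; ring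
        _ = M ^ 2 * (u * (1 - u) ^ (4 * k)) := by
            rw [ht2u, show 2 * k * 2 = 4 * k by ring]; ring
    rw [expand]
    have haux := aux_mul_pow (4 * k) (by omega) hu0 hu1
    have h4k : (0:ℝ) < 4 * k := by positivity
    push_cast at haux
    rw [hkdef] at haux ⊢
    push_cast at haux ⊢
    exact mul_le_mul_of_nonneg_left haux (by positivity)
  -- conclude
  have hfin : ‖v * z ^ k‖ * ‖v * z ^ k‖ < ε ^ 2 := by
    rw [hCs]; exact lt_of_le_of_lt hnormle hBlt
  nlinarith [norm_nonneg (v * z ^ k)]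

/-- Let `(C,D)` be a regular MASA inclusion, `B` a unital commutative complex Banach algebra,
and `Δ₁, Δ₂ : C → B` bounded `D`-modular linear maps agreeing on `D` whose common restriction
`ι = Δᵢ|_D` is `D`-thick in `B`.  Then `Δ₁ = Δ₂`. -/
theorem modular_maps_agree
    {C : Type*} [NormedRing C] [StarRing C] [CStarRing C] [NormedAlgebra ℂ C]
    [CompleteSpace C] [StarModule ℂ C]
    {B : Type*} [NormedCommRing B] [NormedAlgebra ℂ B] [CompleteSpace B]
    (D : StarSubalgebra ℂ C) (hDclosed : IsClosed (D : Set C))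
    (hDcomm : ∀ a ∈ D, ∀ b ∈ D, a * b = b * a)
    -- `D` is a MASA in `C`
    (hmasa : ∀ x : C, (∀ d ∈ D, x * d = d * x) → x ∈ D)
    -- regularity: the span of the normalizers is dense in `C`
    (hreg : Dense
      ((Submodule.span ℂ {v : C | IsNormalizer (D : Set C) v} : Submodule ℂ C) : Set C))
    (Δ₁ Δ₂ : C →L[ℂ] B)
    -- `Δ₁` and `Δ₂` are `D`-modular
    (hmod₁ : ∀ x : C, ∀ d ∈ D, Δ₁ (x * d) = Δ₁ x * Δ₁ d ∧ Δ₁ (d * x) = Δ₁ d * Δ₁ x)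
    (hmod₂ : ∀ x : C, ∀ d ∈ D, Δ₂ (x * d) = Δ₂ x * Δ₂ d ∧ Δ₂ (d * x) = Δ₂ d * Δ₂ x)
    -- `Δ₁` and `Δ₂` agree on `D`
    (hagree : ∀ d ∈ D, Δ₁ d = Δ₂ d)
    -- the common restriction `ι = Δ₁|_D` is `D`-thick in `B`
    (hthick : ∀ b : B, b ≠ 0 → ∃ h ∈ D, h ≠ 0 ∧ ∀ d ∈ D, b * Δ₁ d = 0 → h * d = 0) :
    Δ₁ = Δ₂ := by
  suffices hnorm : ∀ v : C, IsNormalizer (D : Set C) v → Δ₁ v = Δ₂ v by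
    -- extend by linearity and continuity
    have hker : {v : C | IsNormalizer (D : Set C) v} ⊆
        ↑(LinearMap.ker ((Δ₁ - Δ₂ : C →L[ℂ] B) : C →ₗ[ℂ] B)) := by
      intro v hv
      simp only [SetLike.mem_coe, LinearMap.mem_ker, ContinuousLinearMap.coe_coe, ContinuousLinearMap.coe_sub',
        Pi.sub_apply, sub_eq_zero]
      exact hnorm v hv
    have hspan := Submodule.span_le.mpr hker
    have hcl : IsClosed ((LinearMap.ker ((Δ₁ - Δ₂ : C →L[ℂ] B) : C →ₗ[ℂ] B) : Submodule ℂ C) : Set C) :=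
      ContinuousLinearMap.isClosed_ker _
    ext x
    have hx : x ∈ closure ((Submodule.span ℂ {v : C | IsNormalizer (D : Set C) v} :
        Submodule ℂ C) : Set C) := by rw [hreg.closure_eq]; trivial
    have hx2 := closure_mono hspan hx
    rw [hcl.closure_eq] at hx2
    have hx3 := LinearMap.mem_ker.mp hx2
    rw [ContinuousLinearMap.coe_coe, ContinuousLinearMap.coe_sub'] at hx3
    exact sub_eq_zero.mp hx3
  -- the core: normalizers
  intro v hv
  by_contra hb0
  set b := Δ₁ v - Δ₂ v with hbdef
  clear_value b
  have hb : b ≠ 0 := by rw [hbdef]; exact sub_ne_zero.mpr hb0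
  obtain ⟨h, hhD, hh0, hhJ⟩ := hthick b hb
  set a := star v * v with hadef
  clear_value a
  have haD : a ∈ D := by rw [hadef]; simpa using (hv 1 (one_mem D)).1
  -- step 1: `h * (d * a) = h * (v * d * star v)` for all `d ∈ D`
  have hstar : ∀ d ∈ D, h * (d * a) = h * (v * d * star v) := by
    intro d hd
    have hda : d * a ∈ D := mul_mem hd haD
    have hvd : v * d * star v ∈ D := (hv d hd).2
    have hassoc : v * (d * a) = (v * d * star v) * v := by
      rw [hadef]; noncomm_ring
    have e1 : Δ₁ v * Δ₁ (d * a) = Δ₁ (v * d * star v) * Δ₁ v := by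
      rw [← (hmod₁ v (d * a) hda).1, ← (hmod₁ v (v * d * star v) hvd).2, hassoc]
    have e2 : Δ₂ v * Δ₂ (d * a) = Δ₂ (v * d * star v) * Δ₂ v := by
      rw [← (hmod₂ v (d * a) hda).1, ← (hmod₂ v (v * d * star v) hvd).2, hassoc]
    rw [← hagree (d * a) hda, ← hagree (v * d * star v) hvd] at e2
    have e3 : b * Δ₁ (d * a - v * d * star v) = 0 := by
      rw [map_sub, hbdef]
      linear_combination e1 - e2
    have e4 := hhJ (d * a - v * d * star v) (sub_mem hda hvd) e3
    rwa [mul_sub, sub_eq_zero] at e4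
  -- step 2: swap identity
  have hswap : ∀ d ∈ D, h * (v * (d * a)) = h * ((d * a) * v) := by
    intro d hd
    calc h * (v * (d * a)) = h * (v * d * star v) * v := by rw [hadef]; noncomm_ring
      _ = h * (d * a) * v := by rw [← hstar d hd]
      _ = h * ((d * a) * v) := by noncomm_ring
  -- step 3: `h * v` commutes with `D`
  have hcomm : ∀ e ∈ D, (h * v) * e = e * (h * v) := by
    intro e he
    set x := (h * v) * e - e * (h * v) with hxdef
    clear_value x
    set K : ℝ := ‖h‖ * ‖e‖ + ‖e‖ * ‖h‖ with hKdef
    clear_value K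
    have hK0 : 0 ≤ K := by rw [hKdef]; positivity
    have hbound : ∀ ε : ℝ, 0 < ε → ‖x‖ ≤ K * ε := by
      intro ε hε
      obtain ⟨d, hd, hnd⟩ := approx_unit D v (hadef ▸ haD) hε
      rw [← hadef] at hnd
      set w := d * a with hwdef
      clear_value w
      have hwe : w * e = (d * e) * a := by
        calc w * e = d * a * e := by rw [hwdef]
          _ = d * (a * e) := by rw [mul_assoc]
          _ = d * (e * a) := by rw [hDcomm a haD e he]
          _ = d * e * a := by rw [mul_assoc]
      have hde : d * e ∈ D := mul_mem hd he
      -- the key identity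
      have hid : h * (v * w) * e = e * (h * (v * w)) := by
        calc h * (v * w) * e = h * (v * (w * e)) := by noncomm_ring
          _ = h * (v * ((d * e) * a)) := by rw [hwe]
          _ = h * (((d * e) * a) * v) := hswap (d * e) hde
          _ = h * ((e * (d * a)) * v) := by
              congr 2
              calc d * e * a = d * (e * a) := by rw [mul_assoc]
                _ = d * (a * e) := by rw [hDcomm a haD e he]
                _ = (d * a) * e := by rw [mul_assoc]
                _ = e * (d * a) := hDcomm (d * a) (mul_mem hd haD) e he
          _ = (h * e) * ((d * a) * v) := by noncomm_ring
          _ = (e * h) * ((d * a) * v) := by rw [hDcomm h hhD e he]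
          _ = e * (h * ((d * a) * v)) := by noncomm_ring
          _ = e * (h * (v * (d * a))) := by rw [← hswap d hd]
          _ = e * (h * (v * w)) := by rw [hwdef]
      have tri : ‖x‖ ≤ ‖(h * v) * e - h * (v * w) * e‖ + ‖h * (v * w) * e - e * (h * v)‖ := by
        rw [hxdef]
        have := norm_sub_le_norm_sub_add_norm_sub ((h * v) * e) (h * (v * w) * e) (e * (h * v))
        exact this
      have t1 : ‖(h * v) * e - h * (v * w) * e‖ ≤ ‖h‖ * ε * ‖e‖ := by
        have heq : (h * v) * e - h * (v * w) * e = (h * (v - v * w)) * e := by noncomm_ring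
        rw [heq]
        calc ‖(h * (v - v * w)) * e‖ ≤ ‖h * (v - v * w)‖ * ‖e‖ := norm_mul_le _ _
          _ ≤ (‖h‖ * ‖v - v * w‖) * ‖e‖ := by
              exact mul_le_mul_of_nonneg_right (norm_mul_le _ _) (norm_nonneg e)
          _ ≤ ‖h‖ * ε * ‖e‖ := by
              have hrev : ‖v - v * w‖ ≤ ε := by
                rw [norm_sub_rev]; exact hnd.le
              gcongr
      have t2 : ‖h * (v * w) * e - e * (h * v)‖ ≤ ‖e‖ * (‖h‖ * ε) := by
        rw [hid]
        have heq : e * (h * (v * w)) - e * (h * v) = e * (h * (v * w - v)) := by noncomm_ring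
        rw [heq]
        calc ‖e * (h * (v * w - v))‖ ≤ ‖e‖ * ‖h * (v * w - v)‖ := norm_mul_le _ _
          _ ≤ ‖e‖ * (‖h‖ * ‖v * w - v‖) := by
              exact mul_le_mul_of_nonneg_left (norm_mul_le _ _) (norm_nonneg e)
          _ ≤ ‖e‖ * (‖h‖ * ε) := by
              have : ‖v * w - v‖ ≤ ε := hnd.le
              gcongr
      calc ‖x‖ ≤ ‖(h * v) * e - h * (v * w) * e‖ + ‖h * (v * w) * e - e * (h * v)‖ := tri
        _ ≤ ‖h‖ * ε * ‖e‖ + ‖e‖ * (‖h‖ * ε) := add_le_add t1 t2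
        _ = K * ε := by rw [hKdef]; ring
    have hx0 : x = 0 := by
      by_contra hxne
      have hxpos : 0 < ‖x‖ := norm_pos_iff.mpr hxne
      have hεp : 0 < ‖x‖ / (K + 1) := by positivity
      have hble := hbound (‖x‖ / (K + 1)) hεp
      have hlt : K * (‖x‖ / (K + 1)) < ‖x‖ := by
        rw [mul_div_assoc', div_lt_iff₀ (by positivity : (0:ℝ) < K + 1)]
        nlinarith
      linarith
    rw [hxdef] at hx0
    exact sub_eq_zero.mp hx0
  -- step 4: conclude `h * v ∈ D` and derive the contradiction
  have hhvD : h * v ∈ D := hmasa (h * v) hcomm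
  have hag := hagree (h * v) hhvD
  rw [(hmod₁ v h hhD).2, (hmod₂ v h hhD).2, ← hagree h hhD] at hag
  have hbh : b * Δ₁ h = 0 := by
    rw [hbdef]
    linear_combination hag
  have hh2 : h * h = 0 := hhJ h hhD hbh
  apply hh0
  have h4 : star (star h * h) * (star h * h) = 0 := by
    rw [IsSelfAdjoint.star_eq (IsSelfAdjoint.star_mul_self h)]
    calc star h * h * (star h * h) = star h * (h * star h) * h := by noncomm_ring
      _ = star h * (star h * h) * h := by rw [hDcomm h hhD (star h) (star_mem hhD)]
      _ = (star h * star h) * (h * h) := by noncomm_ring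
      _ = 0 := by rw [hh2, mul_zero]
  have h5 : star h * h = 0 := (CStarRing.star_mul_self_eq_zero_iff _).mp h4
  exact (CStarRing.star_mul_self_eq_zero_iff h).mp h5
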